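/- Let F, Q, S ∈ Mₙ(ℝ) with Q and S symmetric, let Λ = [[F, Q],[S, −Fᵀ]] ∈ M₂ₙ(ℝ), and for t ∈ ℝ write exp(tΛ) in n×n blocks as [[Θ₁₁(t), Θ₁₂(t)],[Θ₂₁(t), Θ₂₂(t)]]. Let P₀ ∈ Mₙ(ℝ) be symmetric and let I ⊆ ℝ be an open interval containing 0 on which Y(t) := Θ₂₁(t)P₀ + Θ₂₂(t) is invertible. Then the Riccati solution P(t) := (Θ₁₁(t)P₀ + Θ₁₂(t))·Y(t)⁻¹ is symmetric for every t ∈ I. -/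

import Mathlib

open Matrix

theorem riccati_solution_isSymm (k : ℕ) (F Q S P0 : Matrix (Fin k) (Fin k) ℝ)
    (hQ : Q.IsSymm) (hS : S.IsSymm) (hP0 : P0.IsSymm)
    (I : Set ℝ) (hIopen : IsOpen I) (hIconn : I.OrdConnected) (h0I : (0 : ℝ) ∈ I)
    (Θ11 Θ12 Θ21 Θ22 : ℝ → Matrix (Fin k) (Fin k) ℝ)
    (hΘ : ∀ t : ℝ,
      NormedSpace.exp (t • Matrix.fromBlocks F Q S (-Fᵀ)) =
        Matrix.fromBlocks (Θ11 t) (Θ12 t) (Θ21 t) (Θ22 t))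
    (hY : ∀ t ∈ I, IsUnit (Θ21 t * P0 + Θ22 t)) :
    ∀ t ∈ I, ((Θ11 t * P0 + Θ12 t) * (Θ21 t * P0 + Θ22 t)⁻¹).IsSymm := by
  intro t ht
  set A := Θ11 t with hA
  set B := Θ12 t with hB
  set C := Θ21 t with hC
  set D := Θ22 t with hD
  set Λ : Matrix (Fin k ⊕ Fin k) (Fin k ⊕ Fin k) ℝ := Matrix.fromBlocks F Q S (-Fᵀ) with hΛdef
  set J : Matrix (Fin k ⊕ Fin k) (Fin k ⊕ Fin k) ℝ := Matrix.fromBlocks 0 (-1) 1 0 with hJdef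
  have hJmul : J * (-J) = 1 := by
    simp [hJdef, Matrix.fromBlocks_multiply, ← Matrix.fromBlocks_one,
      Matrix.fromBlocks_neg]
  have hJmul' : (-J) * J = 1 := by
    simp [hJdef, Matrix.fromBlocks_multiply, ← Matrix.fromBlocks_one,
      Matrix.fromBlocks_neg]
  have hJunit : IsUnit J := ⟨⟨J, -J, hJmul, hJmul'⟩, rfl⟩
  have hJinv : J⁻¹ = -J := Matrix.inv_eq_right_inv hJmul
  have hJinvJ : J⁻¹ * J = 1 := by rw [hJinv]; exact hJmul'
  -- conjugation identity
  have hconj : (t • Λ)ᵀ = J * (-(t • Λ)) * J⁻¹ := by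
    rw [hJinv]
    have hQ' : Qᵀ = Q := hQ
    have hS' : Sᵀ = S := hS
    simp only [hΛdef, hJdef, Matrix.transpose_smul, Matrix.smul_mul, Matrix.mul_smul,
      neg_smul, Matrix.neg_mul, Matrix.mul_neg, neg_neg]
    congr 1
    simp [Matrix.fromBlocks_multiply, Matrix.fromBlocks_transpose,
      Matrix.fromBlocks_neg, hQ', hS']
  have hsymp : (NormedSpace.exp (t • Λ))ᵀ * J * (NormedSpace.exp (t • Λ)) = J := by
    have h1 : (NormedSpace.exp (t • Λ))ᵀ = J * NormedSpace.exp (-(t • Λ)) * J⁻¹ := by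
      rw [← Matrix.exp_transpose, hconj, Matrix.exp_conj J _ hJunit]
    have h2 : NormedSpace.exp (-(t • Λ)) * NormedSpace.exp (t • Λ) = 1 := by
      rw [← Matrix.exp_add_of_commute (-(t • Λ)) (t • Λ) (Commute.neg_left rfl), neg_add_cancel,
        NormedSpace.exp_zero]
    calc (NormedSpace.exp (t • Λ))ᵀ * J * (NormedSpace.exp (t • Λ))
        = J * NormedSpace.exp (-(t • Λ)) * (J⁻¹ * J) * NormedSpace.exp (t • Λ) := by
          rw [h1]; noncomm_ring
      _ = J * (NormedSpace.exp (-(t • Λ)) * NormedSpace.exp (t • Λ)) := by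
          rw [hJinvJ]; noncomm_ring
      _ = J := by rw [h2, mul_one]
  rw [hΘ t, ← hA, ← hB, ← hC, ← hD] at hsymp
  -- extract block relations
  have hblocks : Matrix.fromBlocks (Aᵀ * (-C) + Cᵀ * A) (Aᵀ * (-D) + Cᵀ * B)
      (Bᵀ * (-C) + Dᵀ * A) (Bᵀ * (-D) + Dᵀ * B) = J := by
    rw [← hsymp, hJdef]
    simp [Matrix.fromBlocks_transpose, Matrix.fromBlocks_multiply]
    exact ⟨add_comm _ _, add_comm _ _, add_comm _ _, add_comm _ _⟩
  rw [hJdef] at hblocks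
  have e11 : Aᵀ * C = Cᵀ * A := by
    have := congrArg Matrix.toBlocks₁₁ hblocks
    simp [Matrix.toBlocks_fromBlocks₁₁, Matrix.mul_neg] at this
    linear_combination (norm := noncomm_ring) -this
  have e12 : Aᵀ * D = Cᵀ * B + 1 := by
    have := congrArg Matrix.toBlocks₁₂ hblocks
    simp [Matrix.toBlocks_fromBlocks₁₂, Matrix.mul_neg] at this
    linear_combination (norm := noncomm_ring) -this
  have e21 : Bᵀ * C = Dᵀ * A - 1 := by
    have := congrArg Matrix.toBlocks₂₁ hblocks
    simp [Matrix.toBlocks_fromBlocks₂₁, Matrix.mul_neg] at this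
    linear_combination (norm := noncomm_ring) -this
  have e22 : Bᵀ * D = Dᵀ * B := by
    have := congrArg Matrix.toBlocks₂₂ hblocks
    simp [Matrix.toBlocks_fromBlocks₂₂, Matrix.mul_neg] at this
    linear_combination (norm := noncomm_ring) -this
  -- key symmetry relation
  have hP0' : P0ᵀ = P0 := hP0
  set X := A * P0 + B with hX
  set Y := C * P0 + D with hYdef
  have key : Xᵀ * Y = Yᵀ * X := by
    have lhs : Xᵀ * Y = P0 * (Aᵀ * C) * P0 + P0 * (Aᵀ * D) + (Bᵀ * C) * P0 + Bᵀ * D := by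
      rw [hX, hYdef, Matrix.transpose_add, Matrix.transpose_mul, hP0']; noncomm_ring
    have rhs : Yᵀ * X = P0 * (Cᵀ * A) * P0 + P0 * (Cᵀ * B) + (Dᵀ * A) * P0 + Dᵀ * B := by
      rw [hX, hYdef, Matrix.transpose_add, Matrix.transpose_mul, hP0']; noncomm_ring
    rw [lhs, rhs, e11, e12, e21, e22]
    noncomm_ring
  -- conclude
  have hYu : IsUnit Y := hY t ht
  have hdet : IsUnit Y.det := (Matrix.isUnit_iff_isUnit_det Y).mp hYu
  have hdetT : IsUnit Yᵀ.det := by rwa [Matrix.det_transpose]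
  show (X * Y⁻¹)ᵀ = X * Y⁻¹
  rw [Matrix.transpose_mul, Matrix.transpose_nonsing_inv]
  calc Yᵀ⁻¹ * Xᵀ = Yᵀ⁻¹ * (Xᵀ * (Y * Y⁻¹)) := by
        rw [Matrix.mul_nonsing_inv Y hdet, mul_one]
    _ = Yᵀ⁻¹ * Yᵀ * (X * Y⁻¹) := by rw [← mul_assoc Xᵀ Y, key]; noncomm_ring
    _ = X * Y⁻¹ := by rw [Matrix.nonsing_inv_mul _ hdetT, one_mul]
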